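/- Let (C_n, p) be a generic framework on the n-cycle in R^1. Then (C_n,p) has a nonzero positive semidefinite equilibrium stress if and only if it is a stretched cycle, i.e., exactly one edge is backwards (or exactly one edge is forwards) in the induced orientation. -/

import Mathlib

open Matrix

/-- `Ω` is an equilibrium stress matrix of the one-dimensional framework on the cycle
(with vertices `0, 1, …, n+2` in cyclic order): symmetric, supported on the diagonal and
the cycle edges, with zero row sums and satisfying the equilibrium condition. -/
def IsCycleStressMatrix (n : ℕ) (p : Fin (n + 3) → ℝ)
    (Ω : Matrix (Fin (n + 3)) (Fin (n + 3)) ℝ) : Prop :=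
  Ω.IsHermitian ∧
  (∀ i j, Ω i j ≠ 0 → i = j ∨ j = i + 1 ∨ i = j + 1) ∧
  (∀ i, ∑ j, Ω i j = 0) ∧
  (∀ i, ∑ j, Ω i j * p j = 0)

namespace Stmt9Aux

variable {n : ℕ}

lemma two_ne_zero' : (2 : Fin (n+3)) ≠ 0 := by simp [Fin.ext_iff, Nat.mod_eq_of_lt (show 2 < n + 3 by omega)]

lemma succ_ne (i : Fin (n+3)) : i + 1 ≠ i := by simp

lemma pred_ne (i : Fin (n+3)) : i - 1 ≠ i := by
  simp [sub_eq_iff_eq_add, left_eq_add]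

lemma pred_ne_succ (i : Fin (n+3)) : i - 1 ≠ i + 1 := by
  intro h
  rw [sub_eq_iff_eq_add] at h
  have h2 : i + 0 = i + (1 + 1) := by rw [add_zero, ← add_assoc]; exact h
  have h3 := add_left_cancel h2
  have h4 : (2 : Fin (n+3)) = 0 := by rw [show (2 : Fin (n+3)) = 1 + 1 by
    ext; simp [Fin.val_add, Nat.mod_eq_of_lt (show 2 < n + 3 by omega), Nat.mod_eq_of_lt (show 1 < n + 3 by omega)], ← h3]
  exact two_ne_zero' h4

lemma eq_add_one_iff (i j : Fin (n+3)) : i = j + 1 ↔ j = i - 1 := by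
  constructor <;> intro h <;> subst h <;> simp

/-- Sum over `Fin (n+3)` of a function supported on `{i-1, i, i+1}`. -/
lemma sum_three {M : Type*} [AddCommMonoid M] (i : Fin (n+3)) (f : Fin (n+3) → M)
    (h0 : ∀ j, j ≠ i - 1 → j ≠ i → j ≠ i + 1 → f j = 0) :
    ∑ j, f j = f (i-1) + f i + f (i+1) := by
  have hsub : ({i-1, i, i+1} : Finset (Fin (n+3))) ⊆ Finset.univ := Finset.subset_univ _
  rw [← Finset.sum_subset hsub (fun j _ hj => by
    simp only [Finset.mem_insert, Finset.mem_singleton, not_or] at hj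
    exact h0 j hj.1 hj.2.1 hj.2.2)]
  rw [Finset.sum_insert (by simp [pred_ne, pred_ne_succ]),
      Finset.sum_insert (by simp [(succ_ne i).symm]), Finset.sum_singleton, add_assoc]

lemma sum_shift {M : Type*} [AddCommMonoid M] (g : Fin (n+3) → M) :
    ∑ i, g (i+1) = ∑ i, g i :=
  Fintype.sum_equiv (Equiv.addRight 1) _ _ (fun _ => rfl)

lemma sum_d_eq_zero (p : Fin (n+3) → ℝ) : ∑ i, (p (i+1) - p i) = 0 := by
  rw [Finset.sum_sub_distrib, sum_shift (fun i => p i), sub_self]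

/-- Quadratic form of a cycle stress matrix. -/
lemma qform (ω : Fin (n+3) → ℝ) (Ω : Matrix (Fin (n+3)) (Fin (n+3)) ℝ)
    (hd : ∀ i, Ω i i = -(ω i + ω (i-1)))
    (hs : ∀ i, Ω i (i+1) = ω i)
    (hp : ∀ i, Ω i (i-1) = ω (i-1))
    (h0 : ∀ i j, j ≠ i - 1 → j ≠ i → j ≠ i + 1 → Ω i j = 0)
    (x : Fin (n+3) → ℝ) :
    x ⬝ᵥ Ω *ᵥ x = -∑ i, ω i * (x i - x (i+1))^2 := by
  have hin : ∀ i, (Ω *ᵥ x) i =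
      ω (i-1) * x (i-1) + (-(ω i + ω (i-1))) * x i + ω i * x (i+1) := by
    intro i
    show ∑ j, Ω i j * x j = _
    rw [sum_three i _ (fun j h1 h2 h3 => by rw [h0 i j h1 h2 h3, zero_mul]), hd, hs, hp]
  have hA : ∑ i, ω (i-1) * (x i * x (i-1)) = ∑ i, ω i * (x i * x (i+1)) := by
    rw [← sum_shift (fun i => ω (i-1) * (x i * x (i-1)))]
    apply Finset.sum_congr rfl
    intro i _
    simp only [add_sub_cancel_right]
    ring
  have hD : ∑ i, ω (i-1) * x i ^ 2 = ∑ i, ω i * x (i+1) ^ 2 := by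
    rw [← sum_shift (fun i => ω (i-1) * x i ^ 2)]
    apply Finset.sum_congr rfl
    intro i _
    simp only [add_sub_cancel_right]
  have hL : x ⬝ᵥ Ω *ᵥ x = ∑ i, (ω (i-1) * (x i * x (i-1)) + ω i * (x i * x (i+1))
      - ω i * x i ^ 2 - ω (i-1) * x i ^ 2) := by
    show ∑ i, x i * (Ω *ᵥ x) i = _
    apply Finset.sum_congr rfl
    intro i _
    rw [hin]
    ring
  rw [hL]
  rw [Finset.sum_sub_distrib, Finset.sum_sub_distrib, Finset.sum_add_distrib, hA, hD]
  have hR : ∑ i, ω i * (x i - x (i+1))^2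
      = ∑ i, ω i * x i ^2 + ∑ i, ω i * x (i+1)^2 - 2 * ∑ i, ω i * (x i * x (i+1)) := by
    rw [Finset.mul_sum, ← Finset.sum_add_distrib, ← Finset.sum_sub_distrib]
    apply Finset.sum_congr rfl
    intro i _
    ring
  rw [hR]
  ring

/-- Construction of the stress matrix from edge stresses. -/
lemma build (p ω : Fin (n+3) → ℝ) (hne : ω 0 ≠ 0)
    (hconst : ∀ i j, ω i * (p (i+1) - p i) = ω j * (p (j+1) - p j))
    (hform : ∀ y : Fin (n+3) → ℝ, (∑ i, y i) = 0 → ∑ i, ω i * y i ^ 2 ≤ 0) :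
    ∃ Ω, Ω ≠ 0 ∧ IsCycleStressMatrix n p Ω ∧ Ω.PosSemidef := by
  set Ω : Matrix (Fin (n+3)) (Fin (n+3)) ℝ :=
    Matrix.of fun i j => if j = i then -(ω i + ω (i-1)) else if j = i + 1 then ω i
      else if j = i - 1 then ω (i-1) else 0 with hΩdef
  have hdiag : ∀ i, Ω i i = -(ω i + ω (i-1)) := fun i => if_pos rfl
  have hsucc : ∀ i, Ω i (i+1) = ω i := by
    intro i
    show (if i+1 = i then _ else if i+1 = i+1 then _ else _) = _
    rw [if_neg (succ_ne i), if_pos rfl]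
  have hpred : ∀ i, Ω i (i-1) = ω (i-1) := by
    intro i
    show (if i-1 = i then _ else if i-1 = i+1 then _ else if i-1 = i-1 then _ else _) = _
    rw [if_neg (pred_ne i), if_neg (pred_ne_succ i), if_pos rfl]
  have hoff : ∀ i j, j ≠ i - 1 → j ≠ i → j ≠ i + 1 → Ω i j = 0 := by
    intro i j h1 h2 h3
    show (if j = i then _ else if j = i+1 then _ else if j = i-1 then _ else _) = _
    rw [if_neg h2, if_neg h3, if_neg h1]
  have hsymm : ∀ i j, Ω j i = Ω i j := by
    intro i j
    by_cases h1 : j = i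
    · subst h1; rfl
    by_cases h2 : j = i + 1
    · subst h2
      have h := hpred (i+1)
      rw [add_sub_cancel_right] at h
      rw [h, hsucc]
    by_cases h3 : j = i - 1
    · subst h3
      have h := hsucc (i-1)
      rw [sub_add_cancel] at h
      rw [h, hpred]
    · rw [hoff i j h3 h1 h2,
        hoff j i (fun h => h2 ((eq_add_one_iff j i).mpr h)) (fun h => h1 h.symm)
          (fun h => h3 ((eq_add_one_iff i j).mp h))]
  have herm : Ω.IsHermitian := by
    unfold Matrix.IsHermitian
    ext i j
    rw [Matrix.conjTranspose_apply, star_trivial]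
    exact hsymm i j
  have hrow : ∀ i, ∑ j, Ω i j = 0 := by
    intro i
    rw [sum_three i _ (hoff i), hpred, hdiag, hsucc]
    ring
  have heq : ∀ i, ∑ j, Ω i j * p j = 0 := by
    intro i
    rw [sum_three i _ (fun j h1 h2 h3 => by rw [hoff i j h1 h2 h3, zero_mul]),
      hpred, hdiag, hsucc]
    have hc := hconst i (i-1)
    rw [sub_add_cancel] at hc
    linear_combination hc
  have hpsd : Ω.PosSemidef := by
    refine .of_dotProduct_mulVec_nonneg herm (fun x => ?_)
    have hstar : star x = x := by simp
    rw [hstar, qform ω Ω hdiag hsucc hpred hoff x]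
    have := hform (fun i => x i - x (i+1))
      (by rw [Finset.sum_sub_distrib, sum_shift (fun i => x i), sub_self])
    linarith
  refine ⟨Ω, ?_, ⟨herm, ?_, hrow, heq⟩, hpsd⟩
  · intro h
    apply hne
    have h01 := hsucc 0
    rw [zero_add] at h01
    rw [← h01, h]
    simp
  · intro i j hΩne
    by_contra hcon
    push_neg at hcon
    exact hΩne (hoff i j (fun h => hcon.2.2 ((eq_add_one_iff i j).mpr h))
      (fun h => hcon.1 h.symm) hcon.2.1)

/-- Cauchy–Schwarz inequality giving positive semidefiniteness. -/
lemma psd_ineq (e : Fin (n+3) → ℝ) (j0 : Fin (n+3)) (hneg : e j0 < 0)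
    (hpos : ∀ i, i ≠ j0 → 0 < e i) (hsum : ∑ i, e i = 0)
    (y : Fin (n+3) → ℝ) (hy : ∑ i, y i = 0) :
    0 ≤ ∑ i, y i ^ 2 / e i := by
  classical
  set s := Finset.univ.erase j0 with hs
  have hmem : j0 ∈ (Finset.univ : Finset (Fin (n+3))) := Finset.mem_univ _
  have hse : ∑ i ∈ s, e i = -e j0 := by
    have := Finset.sum_erase_add Finset.univ e hmem
    rw [hsum] at this
    linarith
  have hsy : ∑ i ∈ s, y i = -y j0 := by
    have := Finset.sum_erase_add Finset.univ y hmem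
    rw [hy] at this
    linarith
  have hpos' : ∀ i ∈ s, 0 < e i := fun i hi => hpos i (Finset.ne_of_mem_erase hi)
  have hCS := Finset.sum_mul_sq_le_sq_mul_sq s (fun i => Real.sqrt (e i))
    (fun i => y i / Real.sqrt (e i))
  have h1 : ∑ i ∈ s, Real.sqrt (e i) * (y i / Real.sqrt (e i)) = ∑ i ∈ s, y i := by
    apply Finset.sum_congr rfl
    intro i hi
    rw [mul_div_cancel₀]
    exact Real.sqrt_ne_zero'.mpr (hpos' i hi)
  have h2 : ∑ i ∈ s, Real.sqrt (e i) ^ 2 = ∑ i ∈ s, e i := by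
    apply Finset.sum_congr rfl
    intro i hi
    exact Real.sq_sqrt (hpos' i hi).le
  have h3 : ∑ i ∈ s, (y i / Real.sqrt (e i)) ^ 2 = ∑ i ∈ s, y i ^ 2 / e i := by
    apply Finset.sum_congr rfl
    intro i hi
    rw [div_pow, Real.sq_sqrt (hpos' i hi).le]
  rw [h1, h2, h3, hsy, hse] at hCS
  set T := ∑ i ∈ s, y i ^ 2 / e i with hT
  have hTnn : 0 ≤ T := Finset.sum_nonneg fun i hi =>
    div_nonneg (sq_nonneg _) (hpos' i hi).le
  have hsplit : ∑ i, y i ^ 2 / e i = T + y j0 ^ 2 / e j0 := by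
    rw [hT, hs, Finset.sum_erase_add Finset.univ _ hmem]
  rw [hsplit]
  have hb : e j0 ≠ 0 := hneg.ne
  have hCS' : y j0 ^ 2 ≤ -e j0 * T := by nlinarith [hCS]
  have hdiv : (-e j0 * T) / e j0 ≤ y j0 ^ 2 / e j0 :=
    (div_le_div_right_of_neg hneg).mpr hCS'
  have heq2 : (-e j0 * T) / e j0 = -T := by
    field_simp
  rw [heq2] at hdiv
  linarith

/-- A PSD cycle stress matrix cannot have two positive edge stresses. -/
lemma no_two_pos (ω : Fin (n+3) → ℝ) (Ω : Matrix (Fin (n+3)) (Fin (n+3)) ℝ)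
    (hd : ∀ i, Ω i i = -(ω i + ω (i-1)))
    (hs : ∀ i, Ω i (i+1) = ω i)
    (hp : ∀ i, Ω i (i-1) = ω (i-1))
    (h0 : ∀ i j, j ≠ i - 1 → j ≠ i → j ≠ i + 1 → Ω i j = 0)
    (hpsd : Ω.PosSemidef) {j k : Fin (n+3)} (hjk : j ≠ k)
    (hj : 0 < ω j) (hk : 0 < ω k) : False := by
  classical
  set u : Fin (n+3) → Fin (n+3) := fun i => i - (j+1) with hu
  have huinj : Function.Injective u := fun a b h => by
    have := congrArg (· + (j+1)) h
    simpa [hu, sub_add_cancel] using this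
  have hulast : u j = Fin.last (n+2) := by
    have h1 : Fin.last (n+2) + 1 = 0 := Fin.last_add_one (n+2)
    have h2 : u j = -1 := by simp [hu]
    rw [h2]
    exact neg_eq_of_add_eq_zero_left h1
  have huadd : ∀ i, u (i+1) = u i + 1 := by
    intro i
    simp only [hu]
    abel
  have hukne : u k ≠ Fin.last (n+2) := fun h => hjk (huinj (hulast.trans h.symm))
  set m := (u k).val with hm
  have hmlt : m < n + 2 := by
    rcases lt_or_eq_of_le (Fin.le_last (u k)) with h | h
    · exact h
    · exact absurd h hukne
  set x : Fin (n+3) → ℝ := fun i => if (u i).val ≤ m then 1 else 0 with hx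
  have hxj : x j = 0 := by
    show (if (u j).val ≤ m then (1:ℝ) else 0) = 0
    rw [hulast, Fin.val_last, if_neg (by omega)]
  have hxj1 : x (j+1) = 1 := by
    have hv : u (j+1) = 0 := by rw [huadd, hulast, Fin.last_add_one]
    show (if (u (j+1)).val ≤ m then (1:ℝ) else 0) = 1
    rw [hv]
    simp
  have hxk : x k = 1 := by
    show (if (u k).val ≤ m then (1:ℝ) else 0) = 1
    rw [if_pos le_rfl]
  have hxk1 : x (k+1) = 0 := by
    have hv : (u (k+1)).val = m + 1 := by
      rw [huadd, Fin.val_add_one, if_neg hukne]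
    show (if (u (k+1)).val ≤ m then (1:ℝ) else 0) = 0
    rw [hv, if_neg (by omega)]
  have hxoth : ∀ i, i ≠ j → i ≠ k → x i = x (i+1) := by
    intro i hij hik
    have huine : u i ≠ Fin.last (n+2) := fun h => hij (huinj (h.trans hulast.symm))
    have huik : (u i).val ≠ m := fun h => hik (huinj (Fin.ext h))
    have hv : (u (i+1)).val = (u i).val + 1 := by
      rw [huadd, Fin.val_add_one, if_neg huine]
    show (if (u i).val ≤ m then (1:ℝ) else 0) = (if (u (i+1)).val ≤ m then (1:ℝ) else 0)
    rw [hv]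
    rcases le_or_gt ((u i).val) m with h | h
    · rw [if_pos h, if_pos (by omega)]
    · rw [if_neg (by omega), if_neg (by omega)]
  have hqf := qform ω Ω hd hs hp h0 x
  have hsum : ∑ i, ω i * (x i - x (i+1))^2 = ω j + ω k := by
    have hz : ∀ i ∈ Finset.univ, i ∉ ({j, k} : Finset (Fin (n+3))) →
        ω i * (x i - x (i+1))^2 = 0 := by
      intro i _ hi
      simp only [Finset.mem_insert, Finset.mem_singleton, not_or] at hi
      rw [hxoth i hi.1 hi.2]
      simp
    rw [← Finset.sum_subset (Finset.subset_univ ({j,k} : Finset (Fin (n+3)))) hz,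
      Finset.sum_pair hjk, hxj, hxj1, hxk, hxk1]
    norm_num
  have hpos := hpsd.dotProduct_mulVec_nonneg x
  have hstar : star x = x := by simp
  rw [hstar, hqf, hsum] at hpos
  linarith

end Stmt9Aux

open Stmt9Aux Fin.NatCast Fin.CommRing in
/-- A generic framework on the `(n+3)`-cycle in `ℝ¹` has a nonzero PSD
equilibrium stress iff it is a stretched cycle, i.e. exactly one edge is backwards or
exactly one edge is forwards in the induced orientation. -/
theorem stmt9 (n : ℕ) (p : Fin (n + 3) → ℝ)
    (hgen : AlgebraicIndependent ℚ p) :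
    (∃ Ω : Matrix (Fin (n + 3)) (Fin (n + 3)) ℝ,
        Ω ≠ 0 ∧ IsCycleStressMatrix n p Ω ∧ Ω.PosSemidef) ↔
    ((Finset.univ.filter fun i : Fin (n + 3) => p (i + 1) < p i).card = 1 ∨
     (Finset.univ.filter fun i : Fin (n + 3) => p i < p (i + 1)).card = 1) := by
  classical
  have hinj : Function.Injective p := hgen.injective
  set dd : Fin (n+3) → ℝ := fun i => p (i+1) - p i with hdd
  have hdne : ∀ i, dd i ≠ 0 := fun i =>
    sub_ne_zero.mpr (fun h => succ_ne i (hinj h))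
  have hsumd : ∑ i, dd i = 0 := sum_d_eq_zero p
  have hex1 : ∃ i, 0 < dd i := by
    by_contra hcon
    push_neg at hcon
    have := (Finset.sum_eq_zero_iff_of_nonpos (fun i _ => hcon i)).mp hsumd
    exact hdne 0 (this 0 (Finset.mem_univ 0))
  have hex2 : ∃ i, dd i < 0 := by
    by_contra hcon
    push_neg at hcon
    have := (Finset.sum_eq_zero_iff_of_nonneg (fun i _ => hcon i)).mp hsumd
    exact hdne 0 (this 0 (Finset.mem_univ 0))
  constructor
  · rintro ⟨Ω, hΩne, ⟨hherm, hsupp, hrow, heqm⟩, hpsd⟩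
    set ω : Fin (n+3) → ℝ := fun i => Ω i (i+1) with hω
    have hsymm : ∀ i j, Ω j i = Ω i j := by
      intro i j
      have := congrFun (congrFun hherm j) i
      rw [Matrix.conjTranspose_apply, star_trivial] at this
      exact this.symm
    have h0 : ∀ i j, j ≠ i - 1 → j ≠ i → j ≠ i + 1 → Ω i j = 0 := by
      intro i j h1 h2 h3
      by_contra hne'
      rcases hsupp i j hne' with h | h | h
      · exact h2 h.symm
      · exact h3 h
      · exact h1 ((eq_add_one_iff i j).mp h)
    have hp' : ∀ i, Ω i (i-1) = ω (i-1) := by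
      intro i
      rw [hsymm (i-1) i]
      show Ω (i-1) i = Ω (i-1) ((i-1)+1)
      rw [sub_add_cancel]
    have hd' : ∀ i, Ω i i = -(ω i + ω (i-1)) := by
      intro i
      have := hrow i
      rw [sum_three i _ (h0 i), hp'] at this
      have hsi : Ω i (i+1) = ω i := rfl
      rw [hsi] at this
      linarith
    have hrel : ∀ i, ω i * dd i = ω (i-1) * dd (i-1) := by
      intro i
      have := heqm i
      rw [sum_three i _ (fun j h1 h2 h3 => by rw [h0 i j h1 h2 h3, zero_mul]),
        hp', hd'] at this
      have hddi : dd (i-1) = p i - p (i-1) := by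
        show p ((i-1)+1) - p (i-1) = _
        rw [sub_add_cancel]
      rw [hddi]
      have hsi : Ω i (i+1) = ω i := rfl
      rw [hsi] at this
      show ω i * (p (i+1) - p i) = _
      linear_combination this
    have hnat : ∀ k : ℕ, ω (k : Fin (n+3)) * dd (k : Fin (n+3)) = ω 0 * dd 0 := by
      intro k
      induction k with
      | zero => norm_num
      | succ k ih =>
        have hstep := hrel ((k : Fin (n+3)) + 1)
        rw [add_sub_cancel_right] at hstep
        have hcast : ((k+1 : ℕ) : Fin (n+3)) = (k : Fin (n+3)) + 1 := by push_cast; ring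
        rw [hcast, hstep, ih]
    have hconst : ∀ i, ω i * dd i = ω 0 * dd 0 := fun i => by
      have := hnat i.val
      rwa [Fin.cast_val_eq_self] at this
    set c := ω 0 * dd 0 with hc
    have hcne : c ≠ 0 := by
      intro hc0
      apply hΩne
      have hω0 : ∀ i, ω i = 0 := by
        intro i
        have := hconst i
        rw [hc0] at this
        exact (mul_eq_zero.mp this).resolve_right (hdne i)
      ext i j
      by_cases h1 : j = i
      · subst h1; rw [hd' j, hω0, hω0]; simp
      by_cases h2 : j = i + 1
      · subst h2
        show Ω i (i+1) = 0
        exact hω0 i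
      by_cases h3 : j = i - 1
      · subst h3
        rw [hp' i, hω0]
        rfl
      · rw [h0 i j h3 h1 h2]
        rfl
    have hmax1 : ∀ a b : Fin (n+3), 0 < ω a → 0 < ω b → a = b := by
      intro a b ha hb
      by_contra hab
      exact no_two_pos ω Ω hd' (fun i => rfl) hp' h0 hpsd hab ha hb
    rcases hcne.lt_or_gt with hcneg | hcpos
    · -- c < 0 : the backward edges carry positive stress
      left
      have hwpos : ∀ i, dd i < 0 → 0 < ω i := by
        intro i hi
        have h := hconst i
        by_contra hcon
        push_neg at hcon
        nlinarith
      obtain ⟨im, him⟩ := hex2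
      have hmem : ∀ i : Fin (n+3),
          i ∈ Finset.univ.filter (fun i : Fin (n+3) => p (i + 1) < p i) ↔ dd i < 0 := by
        intro i
        simp [hdd, sub_neg]
      refine le_antisymm (Finset.card_le_one.mpr ?_) ?_
      · intro a ha b hb
        exact hmax1 a b (hwpos a ((hmem a).mp ha)) (hwpos b ((hmem b).mp hb))
      · exact Finset.card_pos.mpr ⟨im, (hmem im).mpr him⟩
    · -- c > 0 : the forward edges carry positive stress
      right
      have hwpos : ∀ i, 0 < dd i → 0 < ω i := by
        intro i hi
        have h := hconst i
        by_contra hcon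
        push_neg at hcon
        nlinarith
      obtain ⟨im, him⟩ := hex1
      have hmem : ∀ i : Fin (n+3),
          i ∈ Finset.univ.filter (fun i : Fin (n+3) => p i < p (i + 1)) ↔ 0 < dd i := by
        intro i
        simp [hdd, sub_pos]
      refine le_antisymm (Finset.card_le_one.mpr ?_) ?_
      · intro a ha b hb
        exact hmax1 a b (hwpos a ((hmem a).mp ha)) (hwpos b ((hmem b).mp hb))
      · exact Finset.card_pos.mpr ⟨im, (hmem im).mpr him⟩
  · rintro (h | h)
    · -- exactly one backward edge
      obtain ⟨j0, hj0⟩ := Finset.card_eq_one.mp h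
      have hmem : ∀ i : Fin (n+3), p (i+1) < p i ↔ i = j0 := by
        intro i
        rw [← Finset.mem_singleton, ← hj0]
        simp
      have hneg : dd j0 < 0 := sub_neg.mpr ((hmem j0).mpr rfl)
      have hpos : ∀ i, i ≠ j0 → 0 < dd i := by
        intro i hi
        rcases (hdne i).lt_or_gt with h' | h'
        · exact absurd ((hmem i).mp (sub_neg.mp h')) hi
        · exact h'
      exact build p (fun i => -(1 / dd i))
        (neg_ne_zero.mpr (one_div_ne_zero (hdne 0)))
        (fun i j => by
          show -(1 / dd i) * dd i = -(1 / dd j) * dd j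
          rw [neg_mul, neg_mul, one_div_mul_cancel (hdne i), one_div_mul_cancel (hdne j)])
        (fun y hy => by
          have hkey := psd_ineq dd j0 hneg hpos hsumd y hy
          have : ∑ i, -(1 / dd i) * y i ^ 2 = -∑ i, y i ^ 2 / dd i := by
            rw [← Finset.sum_neg_distrib]
            apply Finset.sum_congr rfl
            intro i _
            field_simp
          rw [this]
          linarith)
    · -- exactly one forward edge
      obtain ⟨j0, hj0⟩ := Finset.card_eq_one.mp h
      have hmem : ∀ i : Fin (n+3), p i < p (i+1) ↔ i = j0 := by
        intro i
        rw [← Finset.mem_singleton, ← hj0]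
        simp
      set e : Fin (n+3) → ℝ := fun i => -(dd i) with he
      have hneg : e j0 < 0 := by
        have hd0 : 0 < dd j0 := by
          show 0 < p (j0 + 1) - p j0
          exact sub_pos.mpr ((hmem j0).mpr rfl)
        show -(dd j0) < 0
        linarith
      have hpos : ∀ i, i ≠ j0 → 0 < e i := by
        intro i hi
        rcases (hdne i).lt_or_gt with h' | h'
        · show 0 < -(dd i); linarith
        · exact absurd ((hmem i).mp (sub_pos.mp h')) hi
      have hsume : ∑ i, e i = 0 := by
        show ∑ i, -(dd i) = 0
        rw [Finset.sum_neg_distrib, hsumd, neg_zero]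
      exact build p (fun i => 1 / dd i)
        (one_div_ne_zero (hdne 0))
        (fun i j => by
          show (1 / dd i) * dd i = (1 / dd j) * dd j
          rw [one_div_mul_cancel (hdne i), one_div_mul_cancel (hdne j)])
        (fun y hy => by
          have hkey := psd_ineq e j0 hneg hpos hsume y hy
          have : ∑ i, (1 / dd i) * y i ^ 2 = -∑ i, y i ^ 2 / e i := by
            rw [← Finset.sum_neg_distrib]
            apply Finset.sum_congr rfl
            intro i _
            show (1 / dd i) * y i ^ 2 = -(y i ^ 2 / -(dd i))
            field_simp
          rw [this]
          linarith)
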